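/- arXiv:1003.5458 — 4 statements merged into one kernel-verified Lean document; each statement's English description precedes it below -/
import Mathlib

section
/- Let G be a connected (P5, complement-of-P5)-free graph containing an induced C5. Then every induced C5 of G is contained in a buoy, and this buoy is either the whole vertex set of G or a homogeneous set of G. -/
namespace SimpleGraph

variable {V W : Type*}

/-- Seidel complement of `G` at vertex `v`. -/
def seidel (G : SimpleGraph V) (v : V) : SimpleGraph V where
  Adj x y := Xor' (G.Adj x y)
    ((G.Adj v x ∧ ¬ G.Adj v y ∧ y ≠ v) ∨ (G.Adj v y ∧ ¬ G.Adj v x ∧ x ≠ v))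
  symm := by
    constructor
    intro x y h
    unfold Xor' at h ⊢
    unfold Xor at h ⊢
    have hc := G.adj_comm x y
    tauto
  loopless := by
    constructor
    intro x h
    unfold Xor' at h
    unfold Xor at h
    simp only [G.irrefl] at h
    tauto

/-- A module (homogeneous set in the weak sense) of a graph. -/
def IsModule (G : SimpleGraph V) (M : Set V) : Prop :=
  ∀ x ∉ M, (∀ y ∈ M, G.Adj x y) ∨ (∀ y ∈ M, ¬ G.Adj x y)

/-- A graph is prime w.r.t. modular decomposition. -/
def IsPrime (G : SimpleGraph V) [Fintype V] : Prop :=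
  3 ≤ Fintype.card V ∧
    ∀ M : Set V, G.IsModule M → M = ∅ ∨ (∃ x, M = {x}) ∨ M = Set.univ

/-- `G` has no induced subgraph isomorphic to `H`. -/
def IndFree (G : SimpleGraph V) (H : SimpleGraph W) : Prop :=
  IsEmpty (H ↪g G)

/-- The bull: triangle 0,1,2 with pendant vertices 3 (at 0) and 4 (at 1). -/
def bull : SimpleGraph (Fin 5) :=
  SimpleGraph.fromRel (fun x y =>
    (x, y) ∈ [((0 : Fin 5), (1 : Fin 5)), (1, 2), (0, 2), (0, 3), (1, 4)])

/-- The house: complement of the path on 5 vertices. -/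
def house : SimpleGraph (Fin 5) := (pathGraph 5)ᶜ

/-- `G` is (P5, House, Bull)-free. -/
def PHBFree (G : SimpleGraph V) : Prop :=
  G.IndFree (pathGraph 5) ∧ G.IndFree house ∧ G.IndFree bull

/-- The half graph: `b i` adjacent to `w j` iff `i + j ≤ m + 1` (1-based). -/
def halfGraph (m : ℕ) : SimpleGraph (Fin m ⊕ Fin m) :=
  SimpleGraph.fromRel (fun x y =>
    match x, y with
    | Sum.inl i, Sum.inr j => i.val + j.val < m
    | _, _ => False)

/-- A buoy partition of a set of vertices. -/
def IsBuoy (G : SimpleGraph V) (A : Fin 5 → Set V) : Prop :=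
  (∀ i, (A i).Nonempty) ∧
  (∀ i j, i ≠ j → Disjoint (A i) (A j)) ∧
  (∀ i, ∀ x ∈ A i, ∀ y ∈ A (i + 1), G.Adj x y) ∧
  (∀ i j, i ≠ j → j ≠ i + 1 → i ≠ j + 1 → ∀ x ∈ A i, ∀ y ∈ A j, ¬ G.Adj x y) ∧
  (∀ B : Fin 5 → Set V,
    ((∀ i j, i ≠ j → Disjoint (B i) (B j)) ∧
     (∀ i, ∀ x ∈ B i, ∀ y ∈ B (i + 1), G.Adj x y) ∧
     (∀ i j, i ≠ j → j ≠ i + 1 → i ≠ j + 1 → ∀ x ∈ B i, ∀ y ∈ B j, ¬ G.Adj x y) ∧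
     (∀ i, A i ⊆ B i)) → B = A)

end SimpleGraph



set_option synthInstance.maxSize 2000
set_option maxHeartbeats 2000000

/-! Auxiliary decidable machinery -/

def cycB (i j : Fin 5) : Bool := (i.val + 1) % 5 == j.val || (j.val + 1) % 5 == i.val
def pB (i j : Fin 5) : Bool := i.val + 1 == j.val || j.val + 1 == i.val
def cpB (i j : Fin 5) : Bool := !(i == j) && !(pB i j)

def oadjB (s : Fin 5 → Bool) : Option (Fin 5) → Option (Fin 5) → Bool
  | some i, some j => cycB i j
  | some i, none => s i
  | none, some j => s j
  | none, none => false

def sIdx (s : Fin 5 → Bool) : ℕ :=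
  (cond (s 0) 1 0) + (cond (s 1) 2 0) + (cond (s 2) 4 0) + (cond (s 3) 8 0) + (cond (s 4) 16 0)

def allowedB (s : Fin 5 → Bool) : Bool :=
  ([0,5,7,9,10,14,18,19,20,25,28,31] : List ℕ).contains (sIdx s)

def gT : ℕ → (Fin 5 → Option (Fin 5))
  | 1 => ![none, some 0, some 1, some 2, some 3]
  | 2 => ![none, some 1, some 0, some 4, some 3]
  | 3 => ![none, some 0, some 4, some 3, some 2]
  | 4 => ![none, some 2, some 1, some 0, some 4]
  | 6 => ![none, some 1, some 0, some 4, some 3]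
  | 8 => ![none, some 3, some 2, some 1, some 0]
  | 11 => ![none, some 2, some 0, some 3, some 1]
  | 12 => ![none, some 2, some 1, some 0, some 4]
  | 13 => ![none, some 1, some 3, some 0, some 2]
  | 15 => ![none, some 4, some 1, some 3, some 0]
  | 16 => ![none, some 4, some 0, some 1, some 2]
  | 17 => ![none, some 0, some 1, some 2, some 3]
  | 21 => ![none, some 1, some 4, some 2, some 0]
  | 22 => ![none, some 0, some 2, some 4, some 1]
  | 23 => ![none, some 3, some 0, some 2, some 4]
  | 24 => ![none, some 3, some 2, some 1, some 0]
  | 26 => ![none, some 0, some 3, some 1, some 4]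
  | 27 => ![none, some 2, some 0, some 3, some 1]
  | 29 => ![none, some 1, some 3, some 0, some 2]
  | 30 => ![none, some 0, some 2, some 4, some 1]
  | _ => ![none, some 0, some 1, some 2, some 3]

theorem FactB : ∀ s : Fin 5 → Bool, allowedB s = false →
    Function.Injective (gT (sIdx s)) ∧
    ((∀ i j, oadjB s (gT (sIdx s) i) (gT (sIdx s) j) = pB i j) ∨
     (∀ i j, oadjB s (gT (sIdx s) i) (gT (sIdx s) j) = cpB i j)) := by decide

theorem FactA : ∀ c a : Fin 5 → Bool,
    (∀ i, (c i || a i) = true) →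
    (∀ s : Fin 5 → Bool, (∀ i, (cond (s i) (c i) (a i)) = true) → allowedB s = true) →
    ((∀ i, c i = false) ∨ (∀ i, a i = false) ∨
      ∃ k : Fin 5, a (k+1) = false ∧ a (k+4) = false ∧ c (k+2) = false ∧ c (k+3) = false) := by
  decide

theorem cycIff : ∀ i j : Fin 5, cycB i j = true ↔ (j = i + 1 ∨ i = j + 1) := by decide
theorem cycFalseNe : ∀ i j : Fin 5, cycB i j = false → (j ≠ i + 1 ∧ i ≠ j + 1) := by decide
theorem cycAdjIff : ∀ i j : Fin 5, (SimpleGraph.cycleGraph 5).Adj i j ↔ cycB i j = true := by decide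
theorem cycSucc : ∀ i : Fin 5, (SimpleGraph.cycleGraph 5).Adj i (i+1) := by decide
theorem cycNonAdj : ∀ i j : Fin 5, i ≠ j → j ≠ i+1 → i ≠ j+1 → ¬(SimpleGraph.cycleGraph 5).Adj i j := by decide
theorem neSucc5 : ∀ i : Fin 5, i + 1 ≠ i := by decide
theorem addFourOfSucc : ∀ i k : Fin 5, i + 1 = k → i = k + 4 := by decide
theorem twoThree : ∀ k j : Fin 5, j ≠ k → j ≠ k + 1 → k ≠ j + 1 → (j = k + 2 ∨ j = k + 3) := by decide

theorem pBiff : ∀ i j : Fin 5, (SimpleGraph.pathGraph 5).Adj i j ↔ pB i j = true := by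
  intro i j
  rw [SimpleGraph.pathGraph_adj]
  simp only [pB, Bool.or_eq_true, beq_iff_eq]

theorem cpBiff : ∀ i j : Fin 5, ((SimpleGraph.pathGraph 5)ᶜ).Adj i j ↔ cpB i j = true := by
  intro i j
  rw [SimpleGraph.compl_adj, SimpleGraph.pathGraph_adj]
  simp only [cpB, pB, Bool.and_eq_true, Bool.not_eq_true', Bool.or_eq_false_iff,
    beq_eq_false_iff_ne, ne_eq, Fin.ext_iff, beq_iff_eq]
  tauto

open SimpleGraph in
theorem typeAllowedX {V : Type*} (G : SimpleGraph V)
    (h1 : IsEmpty (pathGraph 5 ↪g G)) (h2 : IsEmpty ((pathGraph 5)ᶜ ↪g G))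
    (a : Fin 5 → V) (ha : Function.Injective a) (v : V) (hv : ∀ i, v ≠ a i)
    (hC5 : ∀ i j, G.Adj (a i) (a j) ↔ cycB i j = true)
    (s : Fin 5 → Bool) (hs : ∀ i, G.Adj v (a i) ↔ s i = true) :
    allowedB s = true := by
  by_contra hA
  rw [Bool.not_eq_true] at hA
  obtain ⟨ginj, hg⟩ := FactB s hA
  have Finj : Function.Injective (fun o : Option (Fin 5) => o.elim v a) := by
    intro o1 o2 h
    match o1, o2 with
    | none, none => rfl
    | some i, none => exact absurd h.symm (hv i)
    | none, some j => exact absurd h (hv j)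
    | some i, some j => exact congrArg some (ha h)
  have bridge : ∀ x y : Option (Fin 5),
      G.Adj (x.elim v a) (y.elim v a) ↔ oadjB s x y = true := by
    intro x y
    match x, y with
    | none, none => simp [oadjB]
    | none, some j => simpa [oadjB] using hs j
    | some i, none => rw [G.adj_comm]; simpa [oadjB] using hs i
    | some i, some j => simpa [oadjB] using hC5 i j
  rcases hg with hP | hCP
  · refine (h1.false ⟨⟨fun i => ((gT (sIdx s)) i).elim v a, Finj.comp ginj⟩,
      fun {i j} => ?_⟩).elim
    show G.Adj ((gT (sIdx s) i).elim v a) ((gT (sIdx s) j).elim v a) ↔ _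
    rw [bridge, hP i j]; exact (pBiff i j).symm
  · refine (h2.false ⟨⟨fun i => ((gT (sIdx s)) i).elim v a, Finj.comp ginj⟩,
      fun {i j} => ?_⟩).elim
    show G.Adj ((gT (sIdx s) i).elim v a) ((gT (sIdx s) j).elim v a) ↔ _
    rw [bridge, hCP i j]; exact (cpBiff i j).symm

open SimpleGraph in
theorem buoyMainAux {V : Type*} [Fintype V] (G : SimpleGraph V)
    (h1 : IsEmpty (pathGraph 5 ↪g G)) (h2 : IsEmpty ((pathGraph 5)ᶜ ↪g G))
    (f : cycleGraph 5 ↪g G) :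
    ∃ A : Fin 5 → Set V,
      ((∀ i, (A i).Nonempty) ∧
       (∀ i j, i ≠ j → Disjoint (A i) (A j)) ∧
       (∀ i, ∀ x ∈ A i, ∀ y ∈ A (i + 1), G.Adj x y) ∧
       (∀ i j, i ≠ j → j ≠ i + 1 → i ≠ j + 1 → ∀ x ∈ A i, ∀ y ∈ A j, ¬ G.Adj x y) ∧
       (∀ B : Fin 5 → Set V,
         ((∀ i j, i ≠ j → Disjoint (B i) (B j)) ∧
          (∀ i, ∀ x ∈ B i, ∀ y ∈ B (i + 1), G.Adj x y) ∧
          (∀ i j, i ≠ j → j ≠ i + 1 → i ≠ j + 1 → ∀ x ∈ B i, ∀ y ∈ B j, ¬ G.Adj x y) ∧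
          (∀ i, A i ⊆ B i)) → B = A)) ∧ Set.range f ⊆ ⋃ i, A i ∧
      ((⋃ i, A i) = Set.univ ∨
        ((∀ x ∉ (⋃ i, A i), (∀ y ∈ (⋃ i, A i), G.Adj x y) ∨ (∀ y ∈ (⋃ i, A i), ¬ G.Adj x y))
          ∧ 1 < (⋃ i, A i).ncard ∧
          (⋃ i, A i).ncard < Fintype.card V)) := by
  classical
  set A0 : Fin 5 → Set V := fun i => {f i} with hA0def
  set Pre : (Fin 5 → Set V) → Prop := fun B =>
    (∀ i j, i ≠ j → Disjoint (B i) (B j)) ∧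
    (∀ i, ∀ x ∈ B i, ∀ y ∈ B (i + 1), G.Adj x y) ∧
    (∀ i j, i ≠ j → j ≠ i + 1 → i ≠ j + 1 → ∀ x ∈ B i, ∀ y ∈ B j, ¬ G.Adj x y) ∧
    (∀ i, A0 i ⊆ B i) with hPredef
  have hA0Pre : Pre A0 := by
    refine ⟨?_, ?_, ?_, fun i => subset_rfl⟩
    · intro i j hij
      simp only [A0, Set.disjoint_singleton_left, Set.mem_singleton_iff]
      exact fun h => hij (f.injective h)
    · intro i x hx y hy
      simp only [A0, Set.mem_singleton_iff] at hx hy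
      subst hx; subst hy
      exact f.map_rel_iff.mpr (cycSucc i)
    · intro i j hij hji hij2 x hx y hy
      simp only [A0, Set.mem_singleton_iff] at hx hy
      subst hx; subst hy
      exact fun hadj => cycNonAdj i j hij hji hij2 (f.map_rel_iff.mp hadj)
  have hfin : {B : Fin 5 → Set V | Pre B}.Finite := Set.toFinite _
  obtain ⟨B, hBPre, hBmax⟩ := Set.Finite.exists_maximalFor
    (fun B => (⋃ i, B i).ncard) {B : Fin 5 → Set V | Pre B} hfin ⟨A0, hA0Pre⟩
  obtain ⟨hdisj, hcomp, hanti, hsub⟩ := hBPre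
  have hmemf : ∀ i, f i ∈ B i := fun i => hsub i rfl
  have hUmax : ∀ B' : Fin 5 → Set V,
      ((∀ i j, i ≠ j → Disjoint (B' i) (B' j)) ∧
       (∀ i, ∀ x ∈ B' i, ∀ y ∈ B' (i + 1), G.Adj x y) ∧
       (∀ i j, i ≠ j → j ≠ i + 1 → i ≠ j + 1 → ∀ x ∈ B' i, ∀ y ∈ B' j, ¬ G.Adj x y) ∧
       (∀ i, B i ⊆ B' i)) → B' = B := by
    rintro B' ⟨hd', hc', ha', hss⟩
    by_contra hne
    have hPre' : Pre B' := ⟨hd', hc', ha', fun i => (hsub i).trans (hss i)⟩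
    have hlt : (⋃ i, B i).ncard < (⋃ i, B' i).ncard := by
      refine Set.ncard_lt_ncard ?_ (Set.toFinite _)
      rw [Set.ssubset_def]
      refine ⟨Set.iUnion_mono hss, fun hsupset => ?_⟩
      apply hne
      funext j
      refine Set.Subset.antisymm (fun x hx => ?_) (hss j)
      have : x ∈ ⋃ i, B i := hsupset (Set.mem_iUnion.mpr ⟨j, hx⟩)
      obtain ⟨k, hk⟩ := Set.mem_iUnion.mp this
      by_cases hkj : k = j
      · exact hkj ▸ hk
      · exact ((Set.disjoint_left.mp (hd' k j hkj) (hss k hk)) hx).elim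
    exact absurd (hBmax hPre' hlt.le) (not_le.mpr hlt)
  have hrange : Set.range f ⊆ ⋃ i, B i := by
    rintro x ⟨i, rfl⟩
    exact Set.mem_iUnion.mpr ⟨i, hmemf i⟩
  by_cases hUuniv : (⋃ i, B i) = Set.univ
  · exact ⟨B, ⟨fun i => ⟨f i, hmemf i⟩, hdisj, hcomp, hanti, hUmax⟩, hrange, Or.inl hUuniv⟩
  refine ⟨B, ⟨fun i => ⟨f i, hmemf i⟩, hdisj, hcomp, hanti, hUmax⟩, hrange, Or.inr ⟨?_, ?_, ?_⟩⟩
  · -- module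
    intro v hvU
    have hvB : ∀ i, v ∉ B i := fun i hi => hvU (Set.mem_iUnion.mpr ⟨i, hi⟩)
    set c : Fin 5 → Bool := fun i => decide (∃ y ∈ B i, G.Adj v y) with hcdef
    set a : Fin 5 → Bool := fun i => decide (∃ y ∈ B i, ¬ G.Adj v y) with hadef
    have hcT : ∀ i, c i = true → ∃ y ∈ B i, G.Adj v y := by
      intro i h; rw [hcdef] at h; exact of_decide_eq_true h
    have haT : ∀ i, a i = true → ∃ y ∈ B i, ¬ G.Adj v y := by
      intro i h; rw [hadef] at h; exact of_decide_eq_true h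
    have hcF : ∀ i, c i = false → ∀ y ∈ B i, ¬ G.Adj v y := by
      intro i h y hy hadj
      rw [hcdef] at h
      exact (of_decide_eq_false h) ⟨y, hy, hadj⟩
    have haF : ∀ i, a i = false → ∀ y ∈ B i, G.Adj v y := by
      intro i h y hy
      rw [hadef] at h
      by_contra hn
      exact (of_decide_eq_false h) ⟨y, hy, hn⟩
    have hca : ∀ i, (c i || a i) = true := by
      intro i
      rw [Bool.or_eq_true, hcdef, hadef, decide_eq_true_eq, decide_eq_true_eq]
      by_cases hadj : G.Adj v (f i)
      · exact Or.inl ⟨f i, hmemf i, hadj⟩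
      · exact Or.inr ⟨f i, hmemf i, hadj⟩
    have hall : ∀ s : Fin 5 → Bool,
        (∀ i, (cond (s i) (c i) (a i)) = true) → allowedB s = true := by
      intro s hcons
      have hex : ∀ i, ∃ y, y ∈ B i ∧ (G.Adj v y ↔ s i = true) := by
        intro i
        have hi := hcons i
        cases hsi : s i with
        | true =>
          rw [hsi, cond_true] at hi
          obtain ⟨y, hy, hadj⟩ := hcT i hi
          exact ⟨y, hy, iff_of_true hadj rfl⟩
        | false =>
          rw [hsi, cond_false] at hi
          obtain ⟨y, hy, hadj⟩ := haT i hi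
          exact ⟨y, hy, iff_of_false hadj (by simp)⟩
      choose aR hmem hiff using hex
      refine typeAllowedX G h1 h2 aR ?_ v ?_ ?_ s hiff
      · intro i j hij
        by_contra hne
        exact Set.disjoint_left.mp (hdisj i j hne) (hmem i) (hij ▸ hmem j)
      · intro i heq
        exact hvB i (by rw [heq]; exact hmem i)
      · intro i j
        constructor
        · intro hadj
          by_contra hcy
          rw [Bool.not_eq_true] at hcy
          by_cases hij : i = j
          · subst hij; exact G.loopless.irrefl _ hadj
          · obtain ⟨hn1, hn2⟩ := cycFalseNe i j hcy
            exact hanti i j hij hn1 hn2 _ (hmem i) _ (hmem j) hadj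
        · intro hcy
          rcases (cycIff i j).mp hcy with h' | h'
          · subst h'; exact hcomp i _ (hmem i) _ (hmem (i+1))
          · subst h'; exact (hcomp j _ (hmem j) _ (hmem (j+1))).symm
    rcases FactA c a hca hall with hnoc | hnoa | ⟨k, hk1, hk2, hk3, hk4⟩
    · right
      intro y hy
      obtain ⟨i, hyi⟩ := Set.mem_iUnion.mp hy
      exact hcF i (hnoc i) y hyi
    · left
      intro y hy
      obtain ⟨i, hyi⟩ := Set.mem_iUnion.mp hy
      exact haF i (hnoa i) y hyi
    · exfalso
      set B' : Fin 5 → Set V := fun j => if j = k then insert v (B k) else B j with hB'def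
      have hB'k : B' k = insert v (B k) := by rw [hB'def]; simp
      have hB'ne : ∀ j, j ≠ k → B' j = B j := by
        intro j hj; rw [hB'def]; simp [hj]
      have hB'eq : B' = B := by
        refine hUmax B' ⟨?_, ?_, ?_, ?_⟩
        · intro i j hij
          by_cases hi : i = k <;> by_cases hj : j = k
          · exact absurd (hi.trans hj.symm) hij
          · subst hi
            rw [hB'k, hB'ne j hj]
            rw [Set.disjoint_left]
            rintro x (rfl | hx)
            · exact hvB j
            · exact Set.disjoint_left.mp (hdisj i j hij) hx
          · subst hj
            rw [hB'k, hB'ne i hi]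
            rw [Set.disjoint_right]
            rintro x (rfl | hx)
            · exact hvB i
            · exact Set.disjoint_right.mp (hdisj i j hij) hx
          · rw [hB'ne i hi, hB'ne j hj]; exact hdisj i j hij
        · intro i x hx y hy
          by_cases hi : i = k
          · subst hi
            rw [hB'ne (i + 1) (neSucc5 i)] at hy
            rw [hB'k] at hx
            rcases Set.mem_insert_iff.mp hx with rfl | hxB
            · exact haF (i+1) hk1 y hy
            · exact hcomp i x hxB y hy
          · rw [hB'ne i hi] at hx
            by_cases hi1 : i + 1 = k
            · rw [hi1, hB'k] at hy
              rcases Set.mem_insert_iff.mp hy with rfl | hyB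
              · have hik : i = k + 4 := addFourOfSucc i k hi1
                rw [hik] at hx
                exact (haF (k+4) hk2 x hx).symm
              · rw [← hi1] at hyB
                exact hcomp i x hx y hyB
            · rw [hB'ne (i+1) hi1] at hy
              exact hcomp i x hx y hy
        · intro i j hij hji1 hij1 x hx y hy hadj
          by_cases hi : i = k <;> by_cases hj : j = k
          · exact hij (hi.trans hj.symm)
          · subst hi
            rw [hB'k] at hx
            rw [hB'ne j hj] at hy
            rcases Set.mem_insert_iff.mp hx with rfl | hxB
            · rcases twoThree i j (Ne.symm hij) hji1 hij1 with rfl | rfl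
              · exact hcF (i+2) hk3 y hy hadj
              · exact hcF (i+3) hk4 y hy hadj
            · exact hanti i j hij hji1 hij1 x hxB y hy hadj
          · subst hj
            rw [hB'k] at hy
            rw [hB'ne i hi] at hx
            rcases Set.mem_insert_iff.mp hy with rfl | hyB
            · rcases twoThree j i hi hij1 hji1 with rfl | rfl
              · exact hcF (j+2) hk3 x hx hadj.symm
              · exact hcF (j+3) hk4 x hx hadj.symm
            · exact hanti i j hij hji1 hij1 x hx y hyB hadj
          · rw [hB'ne i hi] at hx
            rw [hB'ne j hj] at hy
            exact hanti i j hij hji1 hij1 x hx y hy hadj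
        · intro i
          by_cases hi : i = k
          · subst hi; rw [hB'k]; exact Set.subset_insert _ _
          · rw [hB'ne i hi]
      have hvk : v ∈ B' k := by rw [hB'k]; exact Set.mem_insert _ _
      rw [hB'eq] at hvk
      exact hvB k hvk
  · rw [Set.one_lt_ncard_iff]
    exact ⟨f 0, f 1, Set.mem_iUnion.mpr ⟨0, hmemf 0⟩, Set.mem_iUnion.mpr ⟨1, hmemf 1⟩,
      fun h => by exact absurd (f.injective h) (by decide)⟩
  · calc (⋃ i, B i).ncard < (Set.univ : Set V).ncard :=
          Set.ncard_lt_ncard (Set.ssubset_univ_iff.mpr hUuniv) Set.finite_univ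
      _ = Fintype.card V := by rw [Set.ncard_univ, Nat.card_eq_fintype_card]

open SimpleGraph in
theorem stmt7 {V : Type*} [Fintype V] (G : SimpleGraph V) (hc : G.Connected)
    (h1 : G.IndFree (pathGraph 5)) (h2 : G.IndFree (pathGraph 5)ᶜ)
    (f : cycleGraph 5 ↪g G) :
    ∃ A : Fin 5 → Set V, G.IsBuoy A ∧ Set.range f ⊆ ⋃ i, A i ∧
      ((⋃ i, A i) = Set.univ ∨
        (G.IsModule (⋃ i, A i) ∧ 1 < (⋃ i, A i).ncard ∧
          (⋃ i, A i).ncard < Fintype.card V)) := by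
  obtain ⟨A, hbuoy, hr, hrest⟩ := buoyMainAux G h1 h2 f
  exact ⟨A, hbuoy, hr, hrest⟩
end

section
/- In a prime P5-free bipartite graph, the neighborhoods of any two distinct vertices in the same side of the bipartition are comparable under inclusion (they do not properly overlap). -/
open SimpleGraph

private def buildP5' {V : Type*} (G : SimpleGraph V) (v0 v1 v2 v3 v4 : V)
    (e01 : G.Adj v0 v1) (e12 : G.Adj v1 v2) (e23 : G.Adj v2 v3) (e34 : G.Adj v3 v4)
    (n02 : ¬G.Adj v0 v2) (n03 : ¬G.Adj v0 v3) (n04 : ¬G.Adj v0 v4)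
    (n13 : ¬G.Adj v1 v3) (n14 : ¬G.Adj v1 v4) (n24 : ¬G.Adj v2 v4)
    (d02 : v0 ≠ v2) (d03 : v0 ≠ v3) (d04 : v0 ≠ v4) (d13 : v1 ≠ v3)
    (d14 : v1 ≠ v4) (d24 : v2 ≠ v4) :
    pathGraph 5 ↪g G := by
  have e10 := e01.symm; have e21 := e12.symm; have e32 := e23.symm; have e43 := e34.symm
  have n20 : ¬G.Adj v2 v0 := fun h => n02 h.symm
  have n30 : ¬G.Adj v3 v0 := fun h => n03 h.symm
  have n40 : ¬G.Adj v4 v0 := fun h => n04 h.symm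
  have n31 : ¬G.Adj v3 v1 := fun h => n13 h.symm
  have n41 : ¬G.Adj v4 v1 := fun h => n14 h.symm
  have n42 : ¬G.Adj v4 v2 := fun h => n24 h.symm
  have d01 := e01.ne; have d12 := e12.ne; have d23 := e23.ne; have d34 := e34.ne
  refine ⟨⟨![v0, v1, v2, v3, v4], ?_⟩, ?_⟩
  · intro i j h
    fin_cases i <;> fin_cases j <;> simp_all
  · intro i j
    fin_cases i <;> fin_cases j <;> simp [pathGraph_adj] <;>
      first
        | assumption
        | exact iff_of_true (by assumption) (by decide)
        | exact iff_of_false (by assumption) (by decide)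

private lemma myPreconnected' {V : Type*} [Fintype V] (G : SimpleGraph V)
    (hp : G.IsPrime) : ∀ x y : V, G.Reachable x y := by
  intro x y
  by_contra hxy
  set M : Set V := {z | G.Reachable x z} with hM
  have hmod : G.IsModule M := by
    intro w hw
    right
    intro z hz hadj
    exact hw (hz.trans hadj.symm.reachable)
  rcases hp.2 M hmod with h | ⟨u, hu⟩ | h
  · have : x ∈ M := Reachable.refl x
    rw [h] at this; exact this
  · have hxM : x ∈ M := Reachable.refl x
    rw [hu] at hxM
    have hux : u = x := hxM.symm
    subst hux
    have hiso : ∀ z, ¬ G.Adj u z := by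
      intro z hz
      have : z ∈ M := hz.reachable
      rw [hu] at this
      exact G.ne_of_adj hz this.symm
    have hmod' : G.IsModule {u}ᶜ := by
      intro w hw
      simp only [Set.mem_compl_iff, Set.mem_singleton_iff, not_not] at hw
      subst hw
      exact Or.inr (fun z _ => hiso z)
    rcases hp.2 _ hmod' with h' | ⟨v, hv⟩ | h'
    · have hall : ∀ z : V, z = u := by
        intro z; by_contra hz
        have : z ∈ ({u}ᶜ : Set V) := hz
        rw [h'] at this; exact this
      have hc : Fintype.card V ≤ 1 :=
        Fintype.card_le_one_iff.mpr (fun a b => (hall a).trans (hall b).symm)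
      have := hp.1
      omega
    · have hsub : (Set.univ : Set V) ⊆ {u, v} := by
        intro z _
        by_cases hz : z = u
        · exact Or.inl hz
        · have : z ∈ ({u}ᶜ : Set V) := hz
          rw [hv] at this
          exact Or.inr this
      have h1 : (Set.univ : Set V).ncard ≤ ({u, v} : Set V).ncard :=
        Set.ncard_le_ncard hsub (Set.toFinite _)
      have h2 : ({u, v} : Set V).ncard ≤ 2 := by
        have := Set.ncard_insert_le u ({v} : Set V)
        simpa using this
      have h3 : (Set.univ : Set V).ncard = Fintype.card V := by
        simp [Set.ncard_univ, Nat.card_eq_fintype_card]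
      have := hp.1
      omega
    · have : u ∈ ({u}ᶜ : Set V) := h' ▸ Set.mem_univ u
      exact this rfl
  · exact hxy (by have : y ∈ M := h ▸ Set.mem_univ y; exact this)

private lemma myKey' {V : Type*} (G : SimpleGraph V) (h5 : IsEmpty (pathGraph 5 ↪g G))
    (B W : Set V) (hcover : B ∪ W = Set.univ) (hdisj : Disjoint B W)
    (hB : ∀ x ∈ B, ∀ y ∈ B, ¬ G.Adj x y) (hW : ∀ x ∈ W, ∀ y ∈ W, ¬ G.Adj x y) :
    ∀ n (x y : V), x ∈ B → y ∈ B → x ≠ y → ∀ p : G.Walk x y, p.length ≤ n →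
      ∃ c, G.Adj x c ∧ G.Adj y c := by
  have memW : ∀ {u v : V}, u ∈ B → G.Adj u v → v ∈ W := by
    intro u v hu huv
    have hv : v ∈ B ∪ W := hcover ▸ Set.mem_univ v
    rcases hv with h | h
    · exact absurd huv (hB u hu v h)
    · exact h
  have memB : ∀ {u v : V}, u ∈ W → G.Adj u v → v ∈ B := by
    intro u v hu huv
    have hv : v ∈ B ∪ W := hcover ▸ Set.mem_univ v
    rcases hv with h | h
    · exact h
    · exact absurd huv (hW u hu v h)
  have neBW : ∀ {u v : V}, u ∈ B → v ∈ W → u ≠ v :=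
    fun hu hv h => Set.disjoint_left.mp hdisj hu (h ▸ hv)
  intro n
  induction n with
  | zero =>
    intro x y _ _ hxy p hlen
    cases p with
    | nil => exact absurd rfl hxy
    | cons h q => simp [Walk.length_cons] at hlen
  | succ n IH =>
    intro x y hxB hyB hxy p hlen
    cases p with
    | nil => exact absurd rfl hxy
    | @cons _ c _ h1 q =>
      have hcW : c ∈ W := memW hxB h1
      cases q with
      | nil => exact absurd hcW (fun h => neBW hyB h rfl)
      | @cons _ d _ h2 r =>
        have hdB : d ∈ B := memB hcW h2
        by_cases hyc : G.Adj y c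
        · exact ⟨c, h1, hyc⟩
        by_cases hdy : d = y
        · subst hdy; exact ⟨c, h1, h2.symm⟩
        have hlen' : r.length ≤ n := by
          simp only [Walk.length_cons] at hlen; omega
        by_cases hdx : d = x
        · subst hdx
          exact IH _ _ hxB hyB hxy r hlen'
        obtain ⟨c', hdc', hyc'⟩ := IH d y hdB hyB hdy r hlen'
        by_cases hxc' : G.Adj x c'
        · exact ⟨c', hxc', hyc'⟩
        have hc'W : c' ∈ W := memW hdB hdc'
        have hcc' : c ≠ c' := fun h => hyc (h ▸ hyc')
        exact ((h5.false) (buildP5' G x c d c' y h1 h2 hdc' hyc'.symm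
          (hB x hxB d hdB) hxc' (hB x hxB y hyB)
          (hW c hcW c' hc'W) (fun h => hyc h.symm) (hB d hdB y hyB)
          (fun h => hdx h.symm) (neBW hxB hc'W) hxy hcc'
          (fun h => neBW hyB hcW h.symm) hdy)).elim

private lemma myAux' {V : Type*} (G : SimpleGraph V) (h5 : IsEmpty (pathGraph 5 ↪g G))
    (B W : Set V) (hcover : B ∪ W = Set.univ) (hdisj : Disjoint B W)
    (hB : ∀ x ∈ B, ∀ y ∈ B, ¬ G.Adj x y) (hW : ∀ x ∈ W, ∀ y ∈ W, ¬ G.Adj x y)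
    (hreach : ∀ x y : V, G.Reachable x y) :
    ∀ x y, x ∈ B → y ∈ B → x ≠ y →
      G.neighborSet x ⊆ G.neighborSet y ∨ G.neighborSet y ⊆ G.neighborSet x := by
  have memW : ∀ {u v : V}, u ∈ B → G.Adj u v → v ∈ W := by
    intro u v hu huv
    have hv : v ∈ B ∪ W := hcover ▸ Set.mem_univ v
    rcases hv with h | h
    · exact absurd huv (hB u hu v h)
    · exact h
  have neBW : ∀ {u v : V}, u ∈ B → v ∈ W → u ≠ v :=
    fun hu hv h => Set.disjoint_left.mp hdisj hu (h ▸ hv)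
  intro x y hxB hyB hxy
  by_contra hcon
  push_neg at hcon
  obtain ⟨h1, h2⟩ := hcon
  obtain ⟨a, haX, haY⟩ := Set.not_subset.mp h1
  obtain ⟨b, hbY, hbX⟩ := Set.not_subset.mp h2
  rw [mem_neighborSet] at haX hbY
  rw [mem_neighborSet] at haY hbX
  obtain ⟨p⟩ := hreach x y
  obtain ⟨c, hxc, hyc⟩ := myKey' G h5 B W hcover hdisj hB hW p.length x y hxB hyB hxy p le_rfl
  have haW : a ∈ W := memW hxB haX
  have hbW : b ∈ W := memW hyB hbY
  have hcW : c ∈ W := memW hxB hxc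
  -- P5 : a - x - c - y - b
  exact (h5.false (buildP5' G a x c y b haX.symm hxc hyc.symm hbY
    (hW a haW c hcW) (fun h => haY h.symm) (hW a haW b hbW)
    (hB x hxB y hyB) hbX (hW c hcW b hbW)
    (fun h => haY (h ▸ hyc)) (neBW hyB haW).symm (fun h => haY (h ▸ hbY))
    hxy (neBW hxB hbW) (fun h => hbX (h ▸ hxc)))).elim

open SimpleGraph in
theorem stmt9 {V : Type*} [Fintype V] (G : SimpleGraph V) (hp : G.IsPrime)
    (h5 : G.IndFree (pathGraph 5)) (B W : Set V)
    (hcover : B ∪ W = Set.univ) (hdisj : Disjoint B W)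
    (hB : ∀ x ∈ B, ∀ y ∈ B, ¬ G.Adj x y) (hW : ∀ x ∈ W, ∀ y ∈ W, ¬ G.Adj x y) :
    ∀ x y, ((x ∈ B ∧ y ∈ B) ∨ (x ∈ W ∧ y ∈ W)) → x ≠ y →
      G.neighborSet x ⊆ G.neighborSet y ∨ G.neighborSet y ⊆ G.neighborSet x := by
  have hreach := myPreconnected' G hp
  intro x y hmem hxy
  rcases hmem with ⟨hx, hy⟩ | ⟨hx, hy⟩
  · exact myAux' G h5 B W hcover hdisj hB hW hreach x y hx hy hxy
  · exact myAux' G h5 W B (by rw [Set.union_comm]; exact hcover) hdisj.symm hW hB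
      hreach x y hx hy hxy
end

section
/- The half-graph on 2m vertices (B = {b_1,...,b_m}, W = {w_1,...,w_m}, b_i adjacent to w_j iff i + j ≤ m + 1) contains no induced path on 5 vertices. -/
open SimpleGraph in
theorem stmt12 (m : ℕ) : (halfGraph m).IndFree (pathGraph 5) := by
  constructor
  intro f
  have key : ∀ u v : Fin 5, pathGraph 5 |>.Adj u v → (halfGraph m).Adj (f u) (f v) :=
    fun u v h => f.map_adj_iff.mpr h
  have key' : ∀ u v : Fin 5, ¬ (pathGraph 5).Adj u v → ¬ (halfGraph m).Adj (f u) (f v) :=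
    fun u v h hc => h (f.map_adj_iff.mp hc)
  have h01 := key 0 1 (by rw [pathGraph_adj]; decide)
  have h12 := key 1 2 (by rw [pathGraph_adj]; decide)
  have h23 := key 2 3 (by rw [pathGraph_adj]; decide)
  have h34 := key 3 4 (by rw [pathGraph_adj]; decide)
  have h03 := key' 0 3 (by rw [pathGraph_adj]; decide)
  have h14 := key' 1 4 (by rw [pathGraph_adj]; decide)
  rcases e0 : f 0 with i0 | i0 <;> rcases e1 : f 1 with i1 | i1 <;>
    rcases e2 : f 2 with i2 | i2 <;> rcases e3 : f 3 with i3 | i3 <;>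
    rcases e4 : f 4 with i4 | i4 <;>
    simp only [e0, e1, e2, e3, e4] at h01 h12 h23 h34 h03 h14 <;>
    simp only [halfGraph, fromRel_adj] at h01 h12 h23 h34 h03 h14 <;>
    simp_all <;> omega
end

section
/- For every graph G and vertex v, G is prime with respect to modular decomposition if and only if G * v is prime. -/
namespace SimpleGraph

variable {V : Type*}

lemma seidel_adj' (G : SimpleGraph V) (v x y : V) :
    (G.seidel v).Adj x y ↔ Xor' (G.Adj x y)
      ((G.Adj v x ∧ ¬ G.Adj v y ∧ y ≠ v) ∨ (G.Adj v y ∧ ¬ G.Adj v x ∧ x ≠ v)) := Iff.rfl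

lemma seidel_adj_v' (G : SimpleGraph V) (v y : V) : (G.seidel v).Adj v y ↔ G.Adj v y := by
  rw [seidel_adj']; unfold Xor'; unfold Xor
  have h1 : ¬ G.Adj v v := G.irrefl
  have h2 : ¬ (v ≠ v) := fun h => h rfl
  tauto

lemma seidel_seidel' (G : SimpleGraph V) (v : V) : (G.seidel v).seidel v = G := by
  ext x y
  rw [seidel_adj', seidel_adj_v', seidel_adj_v', seidel_adj']
  unfold Xor'
  unfold Xor
  tauto

lemma isModule_seidel_of_not_mem' {G : SimpleGraph V} {M : Set V} {v : V}
    (hM : G.IsModule M) (hv : v ∉ M) : (G.seidel v).IsModule M := by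
  intro x hx
  by_cases hxv : x = v
  · subst hxv
    rcases hM x hx with h | h
    · exact Or.inl fun y hy => (seidel_adj_v' G x y).mpr (h y hy)
    · exact Or.inr fun y hy hadj => h y hy ((seidel_adj_v' G x y).mp hadj)
  · by_cases h4 : G.Adj v x <;>
      rcases hM x hx with hx1 | hx1 <;> rcases hM v hv with hv1 | hv1 <;>
    first
      | (left; intro y hy
         have h1 := hx1 y hy
         have h2 := hv1 y hy
         have hyv : y ≠ v := fun h => hv (h ▸ hy)
         rw [seidel_adj']; unfold Xor'; tauto)
      | (right; intro y hy hadj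
         have h1 := hx1 y hy
         have h2 := hv1 y hy
         have hyv : y ≠ v := fun h => hv (h ▸ hy)
         rw [seidel_adj'] at hadj; unfold Xor' at hadj; unfold Xor at hadj; tauto)

lemma isModule_seidel_of_mem' {G : SimpleGraph V} {M : Set V} {v : V}
    (hM : G.IsModule M) (hv : v ∈ M) : (G.seidel v).IsModule (Mᶜ ∪ {v}) := by
  intro y hy
  have hyM : y ∈ M := by
    by_contra h; exact hy (Or.inl h)
  have hyv : y ≠ v := fun h => hy (Or.inr h)
  by_cases hAvy : G.Adj v y
  · left
    rintro z (hz | hz)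
    · have hzv : z ≠ v := fun h => hz (h ▸ hv)
      rcases hM z hz with h1 | h1 <;>
      · have h2 := h1 y hyM
        have h3 := h1 v hv
        have hc1 : G.Adj y z ↔ G.Adj z y := G.adj_comm y z
        have hc2 : G.Adj v z ↔ G.Adj z v := G.adj_comm v z
        rw [seidel_adj']; unfold Xor'; tauto
    · have hz' : z = v := hz
      rw [hz']
      exact ((seidel_adj_v' G v y).mpr hAvy).symm
  · right
    rintro z (hz | hz) hadj
    · have hzv : z ≠ v := fun h => hz (h ▸ hv)
      rcases hM z hz with h1 | h1 <;>
      · have h2 := h1 y hyM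
        have h3 := h1 v hv
        have hc1 : G.Adj y z ↔ G.Adj z y := G.adj_comm y z
        have hc2 : G.Adj v z ↔ G.Adj z v := G.adj_comm v z
        rw [seidel_adj'] at hadj; unfold Xor' at hadj; unfold Xor at hadj; tauto
    · have hz' : z = v := hz
      rw [hz'] at hadj
      exact hAvy ((seidel_adj_v' G v y).mp hadj.symm)

lemma isPrime_seidel' {G : SimpleGraph V} [Fintype V] (v : V) (h : G.IsPrime) :
    (G.seidel v).IsPrime := by
  refine ⟨h.1, fun M hM => ?_⟩
  by_cases hv : v ∈ M
  · have hmod := isModule_seidel_of_mem' hM hv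
    rw [seidel_seidel'] at hmod
    rcases h.2 _ hmod with h0 | ⟨x, hx⟩ | hu
    · exact absurd (Set.notMem_empty v (h0 ▸ (Or.inr rfl : v ∈ Mᶜ ∪ {v}))) id
    · right; right
      have hxv : x = v := by
        have hvx : v ∈ ({x} : Set V) := hx ▸ (Or.inr rfl : v ∈ Mᶜ ∪ {v})
        exact hvx.symm
      ext z
      simp only [Set.mem_univ, iff_true]
      by_contra hz
      have : z ∈ ({x} : Set V) := hx ▸ (Or.inl hz : z ∈ Mᶜ ∪ {v})
      rw [this, hxv] at hz
      exact hz hv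
    · right; left
      refine ⟨v, ?_⟩
      ext z
      constructor
      · intro hz
        have : z ∈ Mᶜ ∪ {v} := hu ▸ Set.mem_univ z
        rcases this with h' | h'
        · exact absurd hz h'
        · exact h'
      · intro hz
        rw [hz]; exact hv
  · have hmod := isModule_seidel_of_not_mem' hM hv
    rw [seidel_seidel'] at hmod
    exact h.2 _ hmod

end SimpleGraph

open SimpleGraph in
theorem stmt14 {V : Type*} [Fintype V] (G : SimpleGraph V) (v : V) :
    G.IsPrime ↔ (G.seidel v).IsPrime := by
  constructor
  · exact fun h => isPrime_seidel' v h
  · intro h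
    have := isPrime_seidel' v h
    rwa [seidel_seidel'] at this
end
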